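/- In any orientation of an undirected graph, if the orientation contains a directed cycle, then its indegree vector is not an extreme point of the convex hull of all indegree vectors of orientations of the graph; conversely, the indegree vector of every acyclic orientation is an extreme point. Hence the vertices (corners) of the indegree polytope are exactly the indegree vectors of acyclic orientations. -/

import Mathlib

open Finset

/-- A finite loop-free multigraph: edges indexed by `E`, each with two distinct endpoints. -/
structure Multigraph (V E : Type) where
  fst : E → V
  snd : E → V
  loopless : ∀ e, fst e ≠ snd e

namespace Multigraph

variable {V E : Type} [Fintype V] [DecidableEq V] [Fintype E] [DecidableEq E]

/-- Head of edge `e` under orientation `o`. -/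
def head (G : Multigraph V E) (o : E → Bool) (e : E) : V :=
  if o e then G.fst e else G.snd e

/-- Tail of edge `e` under orientation `o`. -/
def tail (G : Multigraph V E) (o : E → Bool) (e : E) : V :=
  if o e then G.snd e else G.fst e

/-- Indegree of `v` under orientation `o`. -/
def indeg (G : Multigraph V E) (o : E → Bool) (v : V) : ℕ :=
  (Finset.univ.filter (fun e => G.head o e = v)).card

/-- The orientation `o` contains a directed cycle (a closed directed trail). -/
def HasDicycle (G : Multigraph V E) (o : E → Bool) : Prop :=
  ∃ k : ℕ, ∃ hk : 0 < k, ∃ f : Fin k → E, Function.Injective f ∧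
    ∀ i : Fin k, G.head o (f i) = G.tail o (f ⟨(i.val + 1) % k, Nat.mod_lt _ hk⟩)

/-- The orientation `o` is acyclic. -/
def Acyclic (G : Multigraph V E) (o : E → Bool) : Prop := ¬ G.HasDicycle o

/-- Left-degree of `v` in the vertex ordering `σ`. -/
def leftDeg (G : Multigraph V E) (σ : V ≃ Fin (Fintype.card V)) (v : V) : ℕ :=
  (Finset.univ.filter (fun e =>
    (G.fst e = v ∧ σ (G.snd e) < σ v) ∨ (G.snd e = v ∧ σ (G.fst e) < σ v))).card

/-- Right-degree of `v` in the vertex ordering `σ`. -/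
def rightDeg (G : Multigraph V E) (σ : V ≃ Fin (Fintype.card V)) (v : V) : ℕ :=
  (Finset.univ.filter (fun e =>
    (G.fst e = v ∧ σ v < σ (G.snd e)) ∨ (G.snd e = v ∧ σ v < σ (G.fst e)))).card

/-- Degree of `v` in the subgraph induced by `S`. -/
def degIn (G : Multigraph V E) (S : Finset V) (v : V) : ℕ :=
  (Finset.univ.filter (fun e =>
    (G.fst e = v ∨ G.snd e = v) ∧ G.fst e ∈ S ∧ G.snd e ∈ S)).card

/-- Degree of `v` in `G`. -/
def deg (G : Multigraph V E) (v : V) : ℕ :=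
  (Finset.univ.filter (fun e => G.fst e = v ∨ G.snd e = v)).card

/-- The set of vertices appearing at or before `v` in the ordering `σ`. -/
def prefixSet (σ : V ≃ Fin (Fintype.card V)) (v : V) : Finset V :=
  Finset.univ.filter (fun u => σ u ≤ σ v)

end Multigraph

namespace Multigraph

variable {V E : Type} [Fintype V] [DecidableEq V] [Fintype E] [DecidableEq E]
variable (G : Multigraph V E)

lemma head_ne_tail (o : E → Bool) (e : E) : G.head o e ≠ G.tail o e := by
  unfold head tail
  cases h : o e <;> simp [G.loopless e, (G.loopless e).symm, Ne, eq_comm]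

lemma head_flip {o o' : E → Bool} {e : E} (h : o' e = !(o e)) :
    G.head o' e = G.tail o e := by
  unfold head tail; rw [h]; cases o e <;> simp

lemma head_eq_of_eq {o o' : E → Bool} {e : E} (h : o' e = o e) :
    G.head o' e = G.head o e := by unfold head; rw [h]

lemma head_cases (o o' : E → Bool) (e : E) :
    G.head o' e = G.head o e ∨ G.head o' e = G.tail o e := by
  unfold head tail; cases h : o e <;> cases h' : o' e <;> simp

lemma indeg_cast (o : E → Bool) (v : V) :
    (G.indeg o v : ℝ) = ∑ e, if G.head o e = v then (1 : ℝ) else 0 := by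
  simp [indeg, Finset.sum_boole]

lemma indeg_congr {o o' : E → Bool} (h : ∀ e, G.head o' e = G.head o e) :
    G.indeg o' = G.indeg o := by
  funext v
  unfold indeg
  congr 1
  apply Finset.filter_congr
  intro e _
  simp [h e]

/-- A closed (not necessarily edge-injective) walk yields a dicycle. -/
lemma hasDicycle_of_closedWalk (o : E → Bool) :
    ∀ n : ℕ, ∀ hn : 0 < n, ∀ f : Fin n → E,
      (∀ i : Fin n, G.head o (f i) = G.tail o (f ⟨(i.val + 1) % n, Nat.mod_lt _ hn⟩)) →
      G.HasDicycle o := by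
  intro n
  induction n using Nat.strong_induction_on with
  | _ n IH =>
    intro hn f hc
    by_cases hinj : Function.Injective f
    · exact ⟨n, hn, f, hinj, hc⟩
    · rw [Function.not_injective_iff] at hinj
      obtain ⟨a, b, hab, hne⟩ := hinj
      have hvne : a.val ≠ b.val := fun h => hne (Fin.ext h)
      obtain ⟨i, j, hij, hfeq⟩ : ∃ i j : Fin n, i.val < j.val ∧ f i = f j := by
        rcases lt_or_gt_of_ne hvne with h | h
        exacts [⟨a, b, h, hab⟩, ⟨b, a, h, hab.symm⟩]
      have hjn : j.val < n := j.isLt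
      have fapp : ∀ {s t : ℕ} (hs : s < n) (ht : t < n), s = t →
          f ⟨s, hs⟩ = f ⟨t, ht⟩ := by
        intro s t hs ht h
        subst h; rfl
      set m := j.val - i.val with hm
      have hm0 : 0 < m := by omega
      have hmn : m < n := by omega
      refine IH m hmn hm0 (fun p => f ⟨i.val + p.val, by omega⟩) ?_
      intro p
      have hpm : p.val < m := p.isLt
      have hmod : (p.val + 1) % m < m := Nat.mod_lt _ hm0
      show G.head o (f ⟨i.val + p.val, by omega⟩) =
        G.tail o (f ⟨i.val + (p.val + 1) % m, by omega⟩)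
      have hgoal : G.head o (f ⟨i.val + p.val, by omega⟩) =
          G.tail o (f ⟨(i.val + p.val + 1) % n, Nat.mod_lt _ hn⟩) :=
        hc ⟨i.val + p.val, by omega⟩
      rw [hgoal]
      by_cases hp : p.val + 1 < m
      · refine congrArg (G.tail o) (fapp _ _ ?_)
        have h1 : (p.val + 1) % m = p.val + 1 := Nat.mod_eq_of_lt hp
        have h2 : (i.val + p.val + 1) % n = i.val + p.val + 1 :=
          Nat.mod_eq_of_lt (by omega)
        omega
      · have hp1 : p.val + 1 = m := by omega
        have h1 : (p.val + 1) % m = 0 := by rw [hp1, Nat.mod_self]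
        have h2 : (i.val + p.val + 1) % n = j.val := by
          have hj : i.val + p.val + 1 = j.val := by omega
          rw [hj, Nat.mod_eq_of_lt hjn]
        have e1 : f ⟨(i.val + p.val + 1) % n, Nat.mod_lt _ hn⟩ = f j := by
          have : f ⟨(i.val + p.val + 1) % n, Nat.mod_lt _ hn⟩ = f ⟨j.val, hjn⟩ :=
            fapp _ _ h2
          rw [this]
        rw [e1, ← hfeq]
        refine congrArg (G.tail o) ?_
        have : f ⟨i.val + (p.val + 1) % m, by omega⟩ = f ⟨i.val, i.isLt⟩ :=
          fapp _ _ (by omega)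
        rw [← this]

/-- The step relation of the orientation. -/
def Step (o : E → Bool) (u w : V) : Prop := ∃ e, G.tail o e = u ∧ G.head o e = w

lemma exists_walk_of_transGen (o : E → Bool) {u w : V}
    (h : Relation.TransGen (G.Step o) u w) :
    ∃ n : ℕ, ∃ hn : 0 < n, ∃ f : Fin n → E,
      (∀ i : Fin n, ∀ hi : i.val + 1 < n, G.head o (f i) = G.tail o (f ⟨i.val + 1, hi⟩)) ∧
      G.tail o (f ⟨0, hn⟩) = u ∧ G.head o (f ⟨n - 1, by omega⟩) = w := by
  induction h with
  | single hs =>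
    obtain ⟨e, he1, he2⟩ := hs
    exact ⟨1, one_pos, fun _ => e, fun i hi => absurd hi (by omega), he1, he2⟩
  | tail hab hbc ih =>
    obtain ⟨n, hn, f, hchain, h0, hlast⟩ := ih
    obtain ⟨e, he1, he2⟩ := hbc
    refine ⟨n + 1, by omega, fun i => if h : i.val < n then f ⟨i.val, h⟩ else e, ?_, ?_, ?_⟩
    · intro i hi
      have hin : i.val < n := by omega
      by_cases h2 : i.val + 1 < n
      · show G.head o (if h : i.val < n then f ⟨i.val, h⟩ else e) =
          G.tail o (if h : i.val + 1 < n then f ⟨i.val + 1, h⟩ else e)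
        rw [dif_pos hin, dif_pos h2]
        exact hchain ⟨i.val, hin⟩ h2
      · have hn1 : i.val + 1 = n := by omega
        show G.head o (if h : i.val < n then f ⟨i.val, h⟩ else e) =
          G.tail o (if h : i.val + 1 < n then f ⟨i.val + 1, h⟩ else e)
        rw [dif_pos hin, dif_neg h2, he1]
        have : (⟨i.val, hin⟩ : Fin n) = ⟨n - 1, by omega⟩ := Fin.ext (show i.val = n - 1 by omega)
        rw [this, hlast]
    · show G.tail o (if h : (0 : ℕ) < n then f ⟨0, h⟩ else e) = u
      rw [dif_pos hn]
      exact h0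
    · show G.head o (if h : n + 1 - 1 < n then f ⟨n + 1 - 1, h⟩ else e) = _
      rw [dif_neg (by omega)]
      exact he2

lemma not_transGen_self (o : E → Bool) (hA : G.Acyclic o) (v : V) :
    ¬ Relation.TransGen (G.Step o) v v := by
  intro h
  obtain ⟨n, hn, f, hchain, h0, hlast⟩ := G.exists_walk_of_transGen o h
  refine hA (G.hasDicycle_of_closedWalk o n hn f ?_)
  intro i
  by_cases hi : i.val + 1 < n
  · have h1 : (⟨(i.val + 1) % n, Nat.mod_lt _ hn⟩ : Fin n) = ⟨i.val + 1, hi⟩ :=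
      Fin.ext (Nat.mod_eq_of_lt hi)
    rw [h1]
    exact hchain i hi
  · have hlt := i.isLt
    have h1 : (⟨(i.val + 1) % n, Nat.mod_lt _ hn⟩ : Fin n) = ⟨0, hn⟩ := by
      refine Fin.ext ?_
      show (i.val + 1) % n = 0
      have : i.val + 1 = n := by omega
      rw [this, Nat.mod_self]
    have h2 : i = (⟨n - 1, by omega⟩ : Fin n) := Fin.ext (show i.val = n - 1 by omega)
    rw [h1, h2, hlast, h0]

open scoped Classical in
/-- Potential: the number of vertices that reach `v` by a nonempty directed walk. -/
noncomputable def pot (o : E → Bool) (v : V) : ℕ :=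
  (Finset.univ.filter (fun u => Relation.TransGen (G.Step o) u v)).card

lemma pot_lt (o : E → Bool) (hA : G.Acyclic o) (e : E) :
    G.pot o (G.tail o e) < G.pot o (G.head o e) := by
  classical
  unfold pot
  have hstep : G.Step o (G.tail o e) (G.head o e) := ⟨e, rfl, rfl⟩
  apply Finset.card_lt_card
  have hsub : (Finset.univ.filter (fun u => Relation.TransGen (G.Step o) u (G.tail o e))) ⊆
      (Finset.univ.filter (fun u => Relation.TransGen (G.Step o) u (G.head o e))) := by
    intro u hu
    simp only [Finset.mem_filter, Finset.mem_univ, true_and] at hu ⊢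
    exact hu.tail hstep
  rw [Finset.ssubset_iff_of_subset hsub]
  refine ⟨G.tail o e, ?_, ?_⟩
  · simp only [Finset.mem_filter, Finset.mem_univ, true_and]
    exact Relation.TransGen.single hstep
  · simp only [Finset.mem_filter, Finset.mem_univ, true_and]
    exact G.not_transGen_self o hA _

lemma sum_mul_indeg (c : V → ℝ) (o' : E → Bool) :
    ∑ v, c v * (G.indeg o' v : ℝ) = ∑ e, c (G.head o' e) := by
  have h1 : ∀ v, c v * (G.indeg o' v : ℝ) = ∑ e, if G.head o' e = v then c v else 0 := by
    intro v
    rw [G.indeg_cast o' v, Finset.mul_sum]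
    refine Finset.sum_congr rfl fun e _ => ?_
    by_cases h : G.head o' e = v <;> simp [h]
  rw [Finset.sum_congr rfl fun v _ => h1 v, Finset.sum_comm]
  refine Finset.sum_congr rfl fun e _ => ?_
  simp


end Multigraph

open Multigraph

variable {V E : Type} [Fintype V] [DecidableEq V] [Fintype E] [DecidableEq E]

/-- Linear functionals and convex hulls: uniqueness of the maximizer. -/
lemma eq_of_linear_max {S : Set (V → ℝ)} {ℓ : (V → ℝ) → ℝ} (hl : IsLinearMap ℝ ℓ)
    {M : ℝ} {x : V → ℝ} (hSle : ∀ p ∈ S, ℓ p ≤ M) (huniq : ∀ p ∈ S, ℓ p = M → p = x)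
    {y : V → ℝ} (hy : y ∈ convexHull ℝ S) (hly : ℓ y = M) : y = x := by
  rw [_root_.convexHull_eq] at hy
  obtain ⟨ι, t, w, z, hw0, hw1, hzS, hyc⟩ := hy
  rw [Finset.centerMass, hw1, inv_one, one_smul] at hyc
  set L : (V → ℝ) →ₗ[ℝ] ℝ := IsLinearMap.mk' ℓ hl with hL
  have hLl : ∀ p, L p = ℓ p := fun p => rfl
  have hsum : ℓ y = ∑ i ∈ t, w i * ℓ (z i) := by
    rw [← hyc, ← hLl, map_sum]
    refine Finset.sum_congr rfl fun i _ => ?_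
    rw [map_smul, smul_eq_mul, hLl]
  have hzero : ∑ i ∈ t, w i * (M - ℓ (z i)) = 0 := by
    have : ∑ i ∈ t, w i * (M - ℓ (z i)) = (∑ i ∈ t, w i) * M - ∑ i ∈ t, w i * ℓ (z i) := by
      rw [Finset.sum_mul, ← Finset.sum_sub_distrib]
      exact Finset.sum_congr rfl fun i _ => by ring
    rw [this, hw1, one_mul, ← hsum, hly, sub_self]
  have hterm : ∀ i ∈ t, w i * (M - ℓ (z i)) = 0 :=
    (Finset.sum_eq_zero_iff_of_nonneg (fun i hi =>
      mul_nonneg (hw0 i hi) (sub_nonneg.2 (hSle _ (hzS i hi))))).1 hzero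
  have hzx : ∀ i ∈ t, w i • z i = w i • x := by
    intro i hi
    rcases mul_eq_zero.1 (hterm i hi) with h | h
    · rw [h, zero_smul, zero_smul]
    · have : ℓ (z i) = M := by linarith [sub_eq_zero.1 h]
      rw [huniq _ (hzS i hi) this]
  rw [← hyc, Finset.sum_congr rfl hzx, ← Finset.sum_smul, hw1, one_smul]

theorem corners_of_indegree_polytope (G : Multigraph V E) (x : V → ℝ) :
    x ∈ Set.extremePoints ℝ
        (convexHull ℝ {y : V → ℝ | ∃ o : E → Bool, y = fun v => (G.indeg o v : ℝ)}) ↔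
      ∃ o : E → Bool, G.Acyclic o ∧ x = fun v => (G.indeg o v : ℝ) := by
  set S : Set (V → ℝ) := {y : V → ℝ | ∃ o : E → Bool, y = fun v => (G.indeg o v : ℝ)} with hS
  constructor
  · intro hx
    obtain ⟨o, hxo⟩ : x ∈ S := extremePoints_convexHull_subset hx
    refine ⟨o, ?_, hxo⟩
    intro hdi
    obtain ⟨k, hk, f, hinj, hcyc⟩ := hdi
    subst hxo
    set e0 : E := f ⟨0, hk⟩ with he0
    set u : V := G.tail o e0 with hu
    set w : V := G.head o e0 with hw
    have huw : w ≠ u := G.head_ne_tail o e0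
    set o1 : E → Bool := fun e => if e = e0 then !(o e) else o e with ho1
    set T : Finset E := (Finset.univ.filter (fun i : Fin k => i ≠ ⟨0, hk⟩)).image f with hT
    set o2 : E → Bool := fun e => if e ∈ T then !(o e) else o e with ho2
    -- indegree of o1
    have claim1 : ∀ v, (G.indeg o1 v : ℝ) = (G.indeg o v : ℝ)
        - (if w = v then 1 else 0) + (if u = v then 1 else 0) := by
      intro v
      have key1 : ∑ e, ((if G.head o1 e = v then (1:ℝ) else 0)
          - (if G.head o e = v then 1 else 0))
          = (if u = v then (1:ℝ) else 0) - (if w = v then 1 else 0) := by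
        rw [Finset.sum_eq_single_of_mem e0 (Finset.mem_univ e0)]
        · have hflip : o1 e0 = !(o e0) := by rw [ho1]; simp
          rw [G.head_flip hflip, ← hu, ← hw]
        · intro e _ hne
          have heq : o1 e = o e := by rw [ho1]; simp [hne]
          rw [G.head_eq_of_eq heq, sub_self]
      rw [G.indeg_cast o1 v, G.indeg_cast o v]
      have hs : ∑ e, ((if G.head o1 e = v then (1:ℝ) else 0)
            - (if G.head o e = v then 1 else 0))
          = (∑ e, if G.head o1 e = v then (1:ℝ) else 0)
            - ∑ e, (if G.head o e = v then (1:ℝ) else 0) := Finset.sum_sub_distrib _ _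
      rw [hs] at key1
      linarith
    -- indegree of o2
    have claim2 : ∀ v, (G.indeg o2 v : ℝ) = (G.indeg o v : ℝ)
        + (if w = v then 1 else 0) - (if u = v then 1 else 0) := by
      intro v
      have key2 : ∑ e, ((if G.head o2 e = v then (1:ℝ) else 0)
          - (if G.head o e = v then 1 else 0))
          = (if w = v then (1:ℝ) else 0) - (if u = v then 1 else 0) := by
        have hrestrict : ∑ e, ((if G.head o2 e = v then (1:ℝ) else 0)
            - (if G.head o e = v then 1 else 0))
            = ∑ e ∈ T, ((if G.head o2 e = v then (1:ℝ) else 0)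
            - (if G.head o e = v then 1 else 0)) := by
          refine (Finset.sum_subset (Finset.subset_univ T) ?_).symm
          intro e _ heT
          have heq : o2 e = o e := by rw [ho2]; simp [heT]
          rw [G.head_eq_of_eq heq, sub_self]
        have himg : ∑ e ∈ T, ((if G.head o2 e = v then (1:ℝ) else 0)
            - (if G.head o e = v then 1 else 0))
            = ∑ i ∈ Finset.univ.filter (fun i : Fin k => i ≠ ⟨0, hk⟩),
              ((if G.tail o (f i) = v then (1:ℝ) else 0)
               - (if G.head o (f i) = v then 1 else 0)) := by
          rw [hT, Finset.sum_image (fun a _ b _ h => hinj h)]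
          refine Finset.sum_congr rfl fun i hi => ?_
          have hmem : f i ∈ T := by
            rw [hT]; exact Finset.mem_image_of_mem f hi
          have hflip : o2 (f i) = !(o (f i)) := by rw [ho2]; simp [hmem]
          rw [G.head_flip hflip]
        -- the full sum over all indices is zero
        have hfull : ∑ i : Fin k, ((if G.tail o (f i) = v then (1:ℝ) else 0)
            - (if G.head o (f i) = v then 1 else 0)) = 0 := by
          rw [Finset.sum_sub_distrib, sub_eq_zero]
          obtain ⟨k', rfl⟩ : ∃ k', k = k' + 1 := ⟨k - 1, by omega⟩
          have hrot : ∀ i : Fin (k' + 1),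
              (⟨(i.val + 1) % (k' + 1), Nat.mod_lt _ hk⟩ : Fin (k' + 1)) = i + 1 := by
            intro i
            apply Fin.ext
            simp [Fin.val_add, Fin.val_one', Nat.add_mod_mod]
          calc ∑ i : Fin (k' + 1), (if G.tail o (f i) = v then (1:ℝ) else 0)
              = ∑ i : Fin (k' + 1), (if G.tail o (f (i + 1)) = v then (1:ℝ) else 0) := by
                refine (Equiv.sum_comp (Equiv.addRight (1 : Fin (k' + 1)))
                  (fun j => if G.tail o (f j) = v then (1:ℝ) else 0)).symm
            _ = ∑ i : Fin (k' + 1), (if G.head o (f i) = v then (1:ℝ) else 0) := by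
                refine Finset.sum_congr rfl fun i _ => ?_
                rw [← hrot i, ← hcyc i]
        -- restricted sum = full sum - term at 0
        have hsplit : ∑ i ∈ Finset.univ.filter (fun i : Fin k => i ≠ ⟨0, hk⟩),
            ((if G.tail o (f i) = v then (1:ℝ) else 0)
             - (if G.head o (f i) = v then 1 else 0))
            = (∑ i : Fin k, ((if G.tail o (f i) = v then (1:ℝ) else 0)
               - (if G.head o (f i) = v then 1 else 0)))
              - ((if G.tail o (f ⟨0, hk⟩) = v then (1:ℝ) else 0)
                 - (if G.head o (f ⟨0, hk⟩) = v then 1 else 0)) := by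
          rw [Finset.filter_ne' Finset.univ (⟨0, hk⟩ : Fin k)]
          rw [eq_sub_iff_add_eq]
          exact Finset.sum_erase_add _ _ (Finset.mem_univ _)
        rw [hrestrict, himg, hsplit, hfull, ← he0, ← hu, ← hw]
        ring
      rw [G.indeg_cast o2 v, G.indeg_cast o v]
      have hs : ∑ e, ((if G.head o2 e = v then (1:ℝ) else 0)
            - (if G.head o e = v then 1 else 0))
          = (∑ e, if G.head o2 e = v then (1:ℝ) else 0)
            - ∑ e, (if G.head o e = v then (1:ℝ) else 0) := Finset.sum_sub_distrib _ _
      rw [hs] at key2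
      linarith
    set y : V → ℝ := fun v => (G.indeg o1 v : ℝ) with hy
    set z : V → ℝ := fun v => (G.indeg o2 v : ℝ) with hz
    have hymem : y ∈ convexHull ℝ S := subset_convexHull ℝ S ⟨o1, rfl⟩
    have hzmem : z ∈ convexHull ℝ S := subset_convexHull ℝ S ⟨o2, rfl⟩
    have hseg : (fun v => (G.indeg o v : ℝ)) ∈ openSegment ℝ y z := by
      refine ⟨1/2, 1/2, by norm_num, by norm_num, by norm_num, ?_⟩
      funext v
      simp only [Pi.add_apply, Pi.smul_apply, smul_eq_mul, hy, hz]
      rw [claim1 v, claim2 v]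
      ring
    have hyx := hx.2 hymem hzmem hseg
    have := congrFun hyx w
    rw [hy] at this
    simp only at this
    rw [claim1 w] at this
    simp [huw.symm] at this
  · rintro ⟨o, hao, rfl⟩
    set c : V → ℝ := fun v => (G.pot o v : ℝ) with hc
    set ℓ : (V → ℝ) → ℝ := fun p => ∑ v, c v * p v with hℓ
    have hlin : IsLinearMap ℝ ℓ := by
      constructor
      · intro p q
        simp only [hℓ, Pi.add_apply, mul_add, Finset.sum_add_distrib]
      · intro a p
        simp only [hℓ, Pi.smul_apply, smul_eq_mul, Finset.mul_sum]
        exact Finset.sum_congr rfl fun v _ => by ring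
    have hval : ∀ o' : E → Bool, ℓ (fun v => (G.indeg o' v : ℝ)) = ∑ e, c (G.head o' e) :=
      fun o' => G.sum_mul_indeg c o'
    set M : ℝ := ℓ (fun v => (G.indeg o v : ℝ)) with hM
    have hedge : ∀ (o' : E → Bool) (e : E), c (G.head o' e) ≤ c (G.head o e) := by
      intro o' e
      rcases G.head_cases o o' e with h | h
      · rw [h]
      · rw [h]
        show (G.pot o (G.tail o e) : ℝ) ≤ (G.pot o (G.head o e) : ℝ)
        exact_mod_cast (G.pot_lt o hao e).le
    have hSle : ∀ p ∈ S, ℓ p ≤ M := by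
      rintro p ⟨o', rfl⟩
      rw [hval o', hM, hval o]
      exact Finset.sum_le_sum fun e _ => hedge o' e
    have hSuniq : ∀ p ∈ S, ℓ p = M → p = (fun v => (G.indeg o v : ℝ)) := by
      rintro p ⟨o', rfl⟩ hpM
      rw [hval o', hM, hval o] at hpM
      have hall := (Finset.sum_eq_sum_iff_of_le (fun e _ => hedge o' e)).1 hpM
      have hhead : ∀ e, G.head o' e = G.head o e := by
        intro e
        rcases G.head_cases o o' e with h | h
        · exact h
        · exfalso
          have h1 := hall e (Finset.mem_univ e)
          rw [h] at h1
          have h1' : (G.pot o (G.tail o e) : ℝ) = (G.pot o (G.head o e) : ℝ) := h1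
          have h2 : (G.pot o (G.tail o e) : ℝ) < (G.pot o (G.head o e) : ℝ) := by
            exact_mod_cast G.pot_lt o hao e
          linarith
      rw [G.indeg_congr hhead]
    have hhull : ∀ p ∈ convexHull ℝ S, ℓ p ≤ M := by
      intro p hp
      have hsub : S ⊆ {q : V → ℝ | ℓ q ≤ M} := fun q hq => hSle q hq
      exact convexHull_min hsub (convex_halfSpace_le hlin M) hp
    constructor
    · exact subset_convexHull ℝ S ⟨o, rfl⟩
    · intro p hp q hq hseg
      obtain ⟨a, b, ha, hb, hab, hsum⟩ := hseg
      have hls : a * ℓ p + b * ℓ q = M := by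
        have : ℓ (a • p + b • q) = a * ℓ p + b * ℓ q := by
          rw [hlin.map_add, hlin.map_smul, hlin.map_smul, smul_eq_mul, smul_eq_mul]
        rw [← this, hsum]
      have hlp : ℓ p = M := by
        by_contra hne
        have hlt : ℓ p < M := lt_of_le_of_ne (hhull p hp) hne
        have h2 : a * ℓ p + b * ℓ q < a * M + b * M :=
          add_lt_add_of_lt_of_le (mul_lt_mul_of_pos_left hlt ha)
            (mul_le_mul_of_nonneg_left (hhull q hq) hb.le)
        have h3 : a * M + b * M = M := by rw [← add_mul, hab, one_mul]
        linarith
      have hlq : ℓ q = M := by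
        by_contra hne
        have hlt : ℓ q < M := lt_of_le_of_ne (hhull q hq) hne
        have h2 : a * ℓ p + b * ℓ q < a * M + b * M :=
          add_lt_add_of_le_of_lt (mul_le_mul_of_nonneg_left (hhull p hp) ha.le)
            (mul_lt_mul_of_pos_left hlt hb)
        have h3 : a * M + b * M = M := by rw [← add_mul, hab, one_mul]
        linarith
      exact eq_of_linear_max hlin hSle hSuniq hp hlp
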